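/- Given m > 0, set t = ⌈m/3⌉. Let S*_m be a set of words of length m over D such that for any (not necessarily distinct) x1, x2 ∈ S*_m, there is no contiguous subsequence y of x1 of length t and contiguous subsequence z of x2 of length t with y = RC(z). Then for n = mk, every word of length n formed by concatenating k blocks from S*_m is m-SSA. -/

import Mathlib

inductive Base : Type
  | A | T | C | G
deriving DecidableEq, Repr

open Base

def bcompl : Base → Base
  | A => T
  | T => A
  | C => G
  | G => C

/-- Reverse-complement of a DNA word. -/
def RC (w : List Base) : List Base := w.reverse.map bcompl

/-- The contiguous factor of `x` starting at index `i` of length `k`. -/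
def factor (x : List Base) (i k : ℕ) : List Base := (x.drop i).take k

/-- `x` is `m`-SSA: for all `k ≥ m` there is no pair of non-overlapping
contiguous factors of length `k`, one the reverse-complement of the other. -/
def SSA (m : ℕ) (x : List Base) : Prop :=
  ∀ k, m ≤ k → ∀ i j, i + k ≤ x.length → j + k ≤ x.length →
    (i + k ≤ j ∨ j + k ≤ i) → factor x i k ≠ RC (factor x j k)

lemma factor_factor (x : List Base) (i ℓ d t : ℕ) (h : d + t ≤ ℓ) :
    factor (factor x i ℓ) d t = factor x (i + d) t := by
  simp only [factor, List.drop_take, List.take_take, List.drop_drop]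
  congr 1
  omega

lemma factor_length (x : List Base) (i ℓ : ℕ) (h : i + ℓ ≤ x.length) :
    (factor x i ℓ).length = ℓ := by
  simp [factor]
  omega

lemma factor_RC (w : List Base) (d t : ℕ) (h : d + t ≤ w.length) :
    factor (RC w) d t = RC (factor w (w.length - t - d) t) := by
  simp only [factor, RC, ← List.map_drop, ← List.map_take, ← List.map_reverse]
  congr 1
  rw [List.reverse_take, List.reverse_drop, List.length_drop, List.drop_take]
  congr 1
  · omega
  · congr 1; omega

lemma factor_join (m t : ℕ) (ht : 0 < t) :
    ∀ (bs : List (List Base)) (p : ℕ), (∀ b ∈ bs, b.length = m) →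
      p % m + t ≤ m → p + t ≤ bs.flatten.length →
      ∃ b ∈ bs, factor bs.flatten p t = factor b (p % m) t := by
  intro bs
  induction bs with
  | nil => intro p _ _ hlen; simp at hlen; omega
  | cons b rest ih =>
    intro p hall hmod hlen
    have hb : b.length = m := hall b (List.mem_cons_self)
    rcases Nat.lt_or_ge p m with hp | hp
    · refine ⟨b, List.mem_cons_self, ?_⟩
      have hpm : p % m = p := Nat.mod_eq_of_lt hp
      rw [hpm]
      show factor (b ++ rest.flatten) p t = factor b p t
      unfold factor
      rw [List.drop_append_of_le_length (by omega),
        List.take_append_of_le_length (by simp [hb]; omega)]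
    · have hkey : (b ++ rest.flatten).drop p = rest.flatten.drop (p - m) := by
        conv_lhs => rw [show p = b.length + (p - m) by omega]
        rw [List.drop_append]; simp
      have hmm : (p - m) % m = p % m := by
        conv_rhs => rw [show p = m + (p - m) by omega]
        rw [Nat.add_mod_left]
      obtain ⟨b', hb', he⟩ := ih (p - m) (fun c hc => hall c (List.mem_cons_of_mem _ hc))
        (by rw [hmm]; exact hmod)
        (by simp [hb] at hlen ⊢; omega)
      refine ⟨b', List.mem_cons_of_mem _ hb', ?_⟩
      rw [← hmm]
      show factor (b ++ rest.flatten) p t = _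
      unfold factor
      rw [hkey]
      exact he

lemma exists_good (m t ℓ i j : ℕ) (ht : 0 < t) (h3t : 3 * t ≤ m + 2) (htm : t ≤ m)
    (hℓ : m ≤ ℓ) :
    ∃ d, d + t ≤ m ∧ (i + d) % m + t ≤ m ∧ (j + (ℓ - t - d)) % m + t ≤ m := by
  classical
  have hm : 0 < m := lt_of_lt_of_le ht htm
  set N := m - t + 1 with hN
  set bad1 : Finset ℕ := (Finset.range N).filter (fun d => m < (i + d) % m + t) with hb1
  set bad2 : Finset ℕ :=
    (Finset.range N).filter (fun d => m < (j + (ℓ - t - d)) % m + t) with hb2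
  have hc1 : bad1.card ≤ t - 1 := by
    have hcard : (Finset.Ico (m - t + 1) m).card = t - 1 := by
      rw [Nat.card_Ico]; omega
    rw [← hcard]
    apply Finset.card_le_card_of_injOn (fun d => (i + d) % m)
    · intro d hd
      rw [Finset.mem_coe, hb1, Finset.mem_filter, Finset.mem_range] at hd
      have := Nat.mod_lt (i + d) hm
      simp only [Finset.mem_coe, Finset.mem_Ico]
      omega
    · intro d1 hd1 d2 hd2 hf
      simp only [hb1, Finset.coe_filter, Set.mem_setOf_eq, Finset.mem_range] at hd1 hd2
      rcases le_total d1 d2 with hle | hle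
      · have hdvd := (Nat.modEq_iff_dvd' (by omega : i + d1 ≤ i + d2)).mp hf
        have : i + d2 - (i + d1) < m := by omega
        rcases Nat.eq_zero_or_pos (i + d2 - (i + d1)) with h0 | h0
        · omega
        · exact absurd (Nat.le_of_dvd h0 hdvd) (by omega)
      · have hdvd := (Nat.modEq_iff_dvd' (by omega : i + d2 ≤ i + d1)).mp hf.symm
        have : i + d1 - (i + d2) < m := by omega
        rcases Nat.eq_zero_or_pos (i + d1 - (i + d2)) with h0 | h0
        · omega
        · exact absurd (Nat.le_of_dvd h0 hdvd) (by omega)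
  have hc2 : bad2.card ≤ t - 1 := by
    have hcard : (Finset.Ico (m - t + 1) m).card = t - 1 := by
      rw [Nat.card_Ico]; omega
    rw [← hcard]
    apply Finset.card_le_card_of_injOn (fun d => (j + (ℓ - t - d)) % m)
    · intro d hd
      rw [Finset.mem_coe, hb2, Finset.mem_filter, Finset.mem_range] at hd
      have := Nat.mod_lt (j + (ℓ - t - d)) hm
      simp only [Finset.mem_coe, Finset.mem_Ico]
      omega
    · intro d1 hd1 d2 hd2 hf
      simp only [hb2, Finset.coe_filter, Set.mem_setOf_eq, Finset.mem_range] at hd1 hd2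
      have hd1l : d1 ≤ ℓ - t := by omega
      have hd2l : d2 ≤ ℓ - t := by omega
      rcases le_total d1 d2 with hle | hle
      · have hle' : j + (ℓ - t - d2) ≤ j + (ℓ - t - d1) := by omega
        have hdvd := (Nat.modEq_iff_dvd' hle').mp hf.symm
        have heq : j + (ℓ - t - d1) - (j + (ℓ - t - d2)) = d2 - d1 := by omega
        rw [heq] at hdvd
        rcases Nat.eq_zero_or_pos (d2 - d1) with h0 | h0
        · omega
        · exact absurd (Nat.le_of_dvd h0 hdvd) (by omega)
      · have hle' : j + (ℓ - t - d1) ≤ j + (ℓ - t - d2) := by omega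
        have hdvd := (Nat.modEq_iff_dvd' hle').mp hf
        have heq : j + (ℓ - t - d2) - (j + (ℓ - t - d1)) = d1 - d2 := by omega
        rw [heq] at hdvd
        rcases Nat.eq_zero_or_pos (d1 - d2) with h0 | h0
        · omega
        · exact absurd (Nat.le_of_dvd h0 hdvd) (by omega)
  have hunion : (bad1 ∪ bad2).card ≤ 2 * t - 2 :=
    le_trans (Finset.card_union_le _ _) (by omega)
  have hne : (Finset.range N \ (bad1 ∪ bad2)).Nonempty := by
    rw [← Finset.card_pos]
    have h1 := Finset.le_card_sdiff (bad1 ∪ bad2) (Finset.range N)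
    rw [Finset.card_range] at h1
    omega
  obtain ⟨d, hd⟩ := hne
  rw [Finset.mem_sdiff, Finset.mem_union, hb1, hb2, Finset.mem_filter,
    Finset.mem_filter, Finset.mem_range] at hd
  push_neg at hd
  obtain ⟨hdn, hgood⟩ := hd
  refine ⟨d, by omega, ?_, ?_⟩
  · have := hgood.1 hdn
    omega
  · have := hgood.2 hdn
    omega

theorem stmt7 (m : ℕ) (hm : 0 < m) (S : Set (List Base))
    (hlen : ∀ w ∈ S, w.length = m)
    (hS : ∀ x1 ∈ S, ∀ x2 ∈ S, ∀ i j,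
      i + (m + 2) / 3 ≤ m → j + (m + 2) / 3 ≤ m →
      factor x1 i ((m + 2) / 3) ≠ RC (factor x2 j ((m + 2) / 3)))
    (k : ℕ) (bs : List (List Base)) (hk : bs.length = k)
    (hbs : ∀ b ∈ bs, b ∈ S) :
    SSA m bs.flatten := by
  intro ℓ hℓ i j hi hj _ heq
  set t := (m + 2) / 3 with htdef
  have hdm := Nat.div_add_mod (m + 2) 3
  have hmod3 : (m + 2) % 3 < 3 := Nat.mod_lt _ (by norm_num)
  have ht : 0 < t := by omega
  have h3t : 3 * t ≤ m + 2 := by omega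
  have htm : t ≤ m := by omega
  have hball : ∀ b ∈ bs, b.length = m := fun b hb => hlen b (hbs b hb)
  obtain ⟨d, hdt, h1, h2⟩ := exists_good m t ℓ i j ht h3t htm hℓ
  set e := ℓ - t - d with hedef
  have hylen : (factor bs.flatten j ℓ).length = ℓ := factor_length _ _ _ hj
  have key : factor bs.flatten (i + d) t = RC (factor bs.flatten (j + e) t) := by
    rw [← factor_factor bs.flatten i ℓ d t (by omega), heq,
      factor_RC _ _ _ (by rw [hylen]; omega), hylen,
      factor_factor bs.flatten j ℓ (ℓ - t - d) t (by omega)]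
  obtain ⟨b1, hb1, f1⟩ := factor_join m t ht bs (i + d) hball h1 (by omega)
  obtain ⟨b2, hb2, f2⟩ := factor_join m t ht bs (j + e) hball h2 (by omega)
  rw [f1, f2] at key
  exact hS b1 (hbs b1 hb1) b2 (hbs b2 hb2) ((i + d) % m) ((j + e) % m) h1 h2 key
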